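/- Let n ≥ 1, let F be a cdf which is continuous on ℝ, and let U, V : ℝ → ℝ and U_j, L_j, M_j, V_j : ℝ → EReal (j = 1,…,n) be right-continuous functions such that: (c1) U and V are non-negative; (c2) U, each U_j and each M_j are non-decreasing, and V, each V_j and each L_j are non-increasing; (c3) if lim_{x→−∞} U(x) ≠ lim_{x→−∞} V(x), then (lim_{x→−∞} U(x) = 0 or lim_{x→−∞} U_j(x) = lim_{x→−∞} L_j(x) for all j) and (lim_{x→−∞} V(x) = 0 or lim_{x→−∞} M_j(x) = lim_{x→−∞} V_j(x) for all j); (c4) if lim_{x→−∞} U(x) = lim_{x→−∞} V(x) ≠ 0, then lim_{x→−∞} U_j(x) = lim_{x→−∞} V_j(x) and lim_{x→−∞} M_j(x) = lim_{x→−∞} L_j(x) for all j; (c5) lim_{x→−∞} L_j(x) ≤ lim_{x→−∞} U_j(x) for all j, and if lim_{x→−∞} V(x) ≠ 0 then lim_{x→+∞} M_j(x) ≤ lim_{x→+∞} V_j(x) for all j; (c6) lim_{x→+∞} U_n(x) ≥ sup{x ∈ ℝ : F(x) < 1} and lim_{x→+∞} L_1(x) ≤ inf{x ∈ ℝ : F(x)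 > 0}; (c7) lim_{x→+∞} U(x) = 1; (c8) lim_{x→+∞} V(x) = 0 or lim_{x→+∞} M_j(x) = lim_{x→+∞} V_j(x) for all j; (c9) lim_{x→+∞} U_j(x) = lim_{x→+∞} L_{j+1}(x) for all j = 1,…,n−1. Then H(x) = U(x)·Σ_{j=1}^n (F̄(U_j(x)) − F̄(L_j(x))) − V(x)·Σ_{j=1}^n (F̄(V_j(x)) − F̄(M_j(x))) is a cdf. -/

import Mathlib

open Filter Topology Set BigOperators

/-- A cumulative distribution function: non-decreasing, right-continuous,
tending to 0 at `-∞` and to 1 at `+∞`. -/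
def IsCDF (F : ℝ → ℝ) : Prop :=
  Monotone F ∧ (∀ x : ℝ, ContinuousWithinAt F (Set.Ici x) x) ∧
    Tendsto F atBot (nhds 0) ∧ Tendsto F atTop (nhds 1)

/-- The extension of a cdf to the extended reals, with value 0 at `⊥` and 1 at `⊤`. -/
noncomputable def extCDF (F : ℝ → ℝ) (a : EReal) : ℝ :=
  if a = ⊥ then 0 else if a = ⊤ then 1 else F a.toReal


lemma extCDF_coe (F : ℝ → ℝ) (x : ℝ) : extCDF F (x : EReal) = F x := by
  simp [extCDF]

lemma IsCDF.nonneg {F : ℝ → ℝ} (hF : IsCDF F) (x : ℝ) : 0 ≤ F x :=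
  le_of_tendsto hF.2.2.1 (eventually_atBot.2 ⟨x, fun _ hy => hF.1 hy⟩)

lemma IsCDF.le_one {F : ℝ → ℝ} (hF : IsCDF F) (x : ℝ) : F x ≤ 1 :=
  ge_of_tendsto hF.2.2.2 (eventually_atTop.2 ⟨x, fun _ hy => hF.1 hy⟩)

lemma extCDF_mono {F : ℝ → ℝ} (hF : IsCDF F) : Monotone (extCDF F) := by
  intro a b hab
  induction a using EReal.rec <;> induction b using EReal.rec <;>
    simp_all [extCDF, hF.nonneg, hF.le_one] <;>
    first
      | exact hF.nonneg _
      | exact hF.le_one _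
      | exact hF.1 (by exact_mod_cast hab)
      | simp at hab

lemma extCDF_continuous {F : ℝ → ℝ} (hF : IsCDF F) (hFc : Continuous F) :
    Continuous (extCDF F) := by
  rw [continuous_iff_continuousAt]
  intro a
  induction a using EReal.rec with
  | coe x =>
      have : ContinuousAt (extCDF F ∘ (fun r : ℝ => (r : EReal))) x := by
        have : (extCDF F ∘ (fun r : ℝ => (r : EReal))) = F := by
          ext r; simp [extCDF]
        rw [this]; exact hFc.continuousAt
      rw [ContinuousAt, EReal.nhds_coe, tendsto_map'_iff]
      have h := this.tendsto; rwa [Function.comp_apply, extCDF_coe] at h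
  | bot =>
      rw [ContinuousAt]
      have h0 : extCDF F ⊥ = 0 := by simp [extCDF]
      rw [h0, Metric.tendsto_nhds]
      intro ε hε
      obtain ⟨M, hM⟩ := eventually_atBot.1 (Metric.tendsto_nhds.1 hF.2.2.1 ε hε)
      filter_upwards [Iio_mem_nhds (show (⊥ : EReal) < (M : EReal) from EReal.bot_lt_coe M)]
        with a ha
      induction a using EReal.rec with
      | bot => simpa [extCDF] using hε
      | coe r =>
          rw [extCDF_coe]
          exact hM r (le_of_lt (by simpa using (EReal.coe_lt_coe_iff.1 (by simpa using ha))))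
      | top => exact absurd ha (by simp)
  | top =>
      rw [ContinuousAt]
      have h0 : extCDF F ⊤ = 1 := by simp [extCDF]
      rw [h0, Metric.tendsto_nhds]
      intro ε hε
      obtain ⟨M, hM⟩ := eventually_atTop.1 (Metric.tendsto_nhds.1 hF.2.2.2 ε hε)
      filter_upwards [Ioi_mem_nhds (show (M : EReal) < (⊤ : EReal) from EReal.coe_lt_top M)]
        with a ha
      induction a using EReal.rec with
      | top => simpa [extCDF] using hε
      | coe r =>
          rw [extCDF_coe]
          exact hM r (le_of_lt (by simpa using (EReal.coe_lt_coe_iff.1 (by simpa using ha))))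
      | bot => exact absurd ha (by simp)

lemma extCDF_eq_one {F : ℝ → ℝ} (hF : IsCDF F) (hFc : Continuous F) {a : EReal}
    (h : sSup ((fun x : ℝ => (x : EReal)) '' {x | F x < 1}) ≤ a) : extCDF F a = 1 := by
  have key : ∀ r : ℝ, a < (r : EReal) → F r = 1 := by
    intro r hr
    by_contra hne
    have hlt : F r < 1 := lt_of_le_of_ne (hF.le_one r) hne
    have : (r : EReal) ≤ sSup ((fun x : ℝ => (x : EReal)) '' {x | F x < 1}) :=
      le_sSup ⟨r, hlt, rfl⟩
    exact absurd (this.trans h) (not_le.2 hr)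
  induction a using EReal.rec with
  | top => simp [extCDF]
  | bot =>
      exfalso
      have hall : ∀ r : ℝ, F r = 1 := fun r => key r (EReal.bot_lt_coe r)
      have : Tendsto F atBot (nhds 1) := by
        simpa [funext hall] using tendsto_const_nhds (α := ℝ) (f := atBot) (a := (1:ℝ))
      exact one_ne_zero (tendsto_nhds_unique this hF.2.2.1)
  | coe s =>
      rw [extCDF_coe]
      have h1 : Tendsto F (nhdsWithin s (Ioi s)) (nhds (F s)) :=
        (hFc.continuousAt).continuousWithinAt
      have h2 : Tendsto F (nhdsWithin s (Ioi s)) (nhds 1) := by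
        refine Tendsto.congr' ?_ (tendsto_const_nhds (α := ℝ) (x := (1:ℝ)))
        filter_upwards [self_mem_nhdsWithin] with r hr
        exact (key r (by exact_mod_cast hr)).symm
      exact tendsto_nhds_unique h1 h2

lemma extCDF_eq_zero {F : ℝ → ℝ} (hF : IsCDF F) (hFc : Continuous F) {a : EReal}
    (h : a ≤ sInf ((fun x : ℝ => (x : EReal)) '' {x | 0 < F x})) : extCDF F a = 0 := by
  have key : ∀ r : ℝ, (r : EReal) < a → F r = 0 := by
    intro r hr
    by_contra hne
    have hlt : 0 < F r := lt_of_le_of_ne (hF.nonneg r) (Ne.symm hne)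
    have : sInf ((fun x : ℝ => (x : EReal)) '' {x | 0 < F x}) ≤ (r : EReal) :=
      sInf_le ⟨r, hlt, rfl⟩
    exact absurd (h.trans this) (not_le.2 hr)
  induction a using EReal.rec with
  | bot => simp [extCDF]
  | top =>
      exfalso
      have hall : ∀ r : ℝ, F r = 0 := fun r => key r (EReal.coe_lt_top r)
      have : Tendsto F atTop (nhds 0) := by
        simpa [funext hall] using tendsto_const_nhds (α := ℝ) (f := atTop) (a := (0:ℝ))
      exact one_ne_zero (tendsto_nhds_unique hF.2.2.2 this)
  | coe s =>
      rw [extCDF_coe]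
      have h1 : Tendsto F (nhdsWithin s (Iio s)) (nhds (F s)) :=
        (hFc.continuousAt).continuousWithinAt
      have h2 : Tendsto F (nhdsWithin s (Iio s)) (nhds 0) := by
        refine Tendsto.congr' ?_ (tendsto_const_nhds (α := ℝ) (x := (0:ℝ)))
        filter_upwards [self_mem_nhdsWithin] with r hr
        exact (key r (by exact_mod_cast hr)).symm
      exact tendsto_nhds_unique h1 h2

lemma telescope_sum {n : ℕ} (hn : 1 ≤ n) (b c : Fin n → ℝ)
    (h : ∀ j : Fin n, ∀ hj : (j : ℕ) + 1 < n, b j = c ⟨(j : ℕ) + 1, hj⟩) :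
    ∑ j, (b j - c j) = b ⟨n - 1, Nat.sub_lt hn Nat.one_pos⟩ - c ⟨0, Nat.lt_of_lt_of_le Nat.one_pos hn⟩ := by
  set a : ℕ → ℝ := fun k => if hk : k < n then c ⟨k, hk⟩ else b ⟨n - 1, Nat.sub_lt hn Nat.one_pos⟩ with ha
  have key : ∀ j : Fin n, b j - c j = a ((j : ℕ) + 1) - a (j : ℕ) := by
    intro j
    have hj : (j : ℕ) < n := j.2
    by_cases h1 : (j : ℕ) + 1 < n
    · simp only [ha]; rw [dif_pos h1, dif_pos hj, h j h1]
    · have hje : (j : ℕ) = n - 1 := by omega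
      simp only [ha]; rw [dif_neg (by omega), dif_pos hj]
      congr 2
      exact Fin.ext hje
  calc ∑ j, (b j - c j) = ∑ j : Fin n, ((fun k => a (k + 1) - a k) (j : ℕ)) :=
        Finset.sum_congr rfl (fun j _ => key j)
    _ = ∑ k ∈ Finset.range n, (a (k + 1) - a k) :=
        Fin.sum_univ_eq_sum_range (fun k => a (k + 1) - a k) n
    _ = a n - a 0 := Finset.sum_range_sub a n
    _ = b ⟨n - 1, Nat.sub_lt hn Nat.one_pos⟩ - c ⟨0, Nat.lt_of_lt_of_le Nat.one_pos hn⟩ := by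
        simp only [ha]; rw [dif_neg (lt_irrefl n), dif_pos (Nat.lt_of_lt_of_le Nat.one_pos hn)]

/-- Theorem 1: the method to generate distributions and classes of probability
distributions. -/
theorem stmt_0
    (n : ℕ) (hn : 1 ≤ n)
    (F : ℝ → ℝ) (hF : IsCDF F) (hFc : Continuous F)
    (U V : ℝ → ℝ) (Uj Lj Mj Vj : Fin n → ℝ → EReal)
    (hUrc : ∀ x : ℝ, ContinuousWithinAt U (Set.Ici x) x)
    (hVrc : ∀ x : ℝ, ContinuousWithinAt V (Set.Ici x) x)
    (hUjrc : ∀ j, ∀ x : ℝ, ContinuousWithinAt (Uj j) (Set.Ici x) x)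
    (hLjrc : ∀ j, ∀ x : ℝ, ContinuousWithinAt (Lj j) (Set.Ici x) x)
    (hMjrc : ∀ j, ∀ x : ℝ, ContinuousWithinAt (Mj j) (Set.Ici x) x)
    (hVjrc : ∀ j, ∀ x : ℝ, ContinuousWithinAt (Vj j) (Set.Ici x) x)
    (c1U : ∀ x, 0 ≤ U x) (c1V : ∀ x, 0 ≤ V x)
    (c2U : Monotone U) (c2Uj : ∀ j, Monotone (Uj j)) (c2Mj : ∀ j, Monotone (Mj j))
    (c2V : Antitone V) (c2Vj : ∀ j, Antitone (Vj j)) (c2Lj : ∀ j, Antitone (Lj j))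
    -- the limits at `-∞` and `+∞` of all the monotone functions involved
    (uBot vBot uTop vTop : ℝ)
    (UjBot LjBot MjBot VjBot UjTop LjTop MjTop VjTop : Fin n → EReal)
    (hU_bot : Tendsto U atBot (nhds uBot)) (hV_bot : Tendsto V atBot (nhds vBot))
    (hU_top : Tendsto U atTop (nhds uTop)) (hV_top : Tendsto V atTop (nhds vTop))
    (hUj_bot : ∀ j, Tendsto (Uj j) atBot (nhds (UjBot j)))
    (hLj_bot : ∀ j, Tendsto (Lj j) atBot (nhds (LjBot j)))
    (hMj_bot : ∀ j, Tendsto (Mj j) atBot (nhds (MjBot j)))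
    (hVj_bot : ∀ j, Tendsto (Vj j) atBot (nhds (VjBot j)))
    (hUj_top : ∀ j, Tendsto (Uj j) atTop (nhds (UjTop j)))
    (hLj_top : ∀ j, Tendsto (Lj j) atTop (nhds (LjTop j)))
    (hMj_top : ∀ j, Tendsto (Mj j) atTop (nhds (MjTop j)))
    (hVj_top : ∀ j, Tendsto (Vj j) atTop (nhds (VjTop j)))
    (c3 : uBot ≠ vBot →
      (uBot = 0 ∨ ∀ j, UjBot j = LjBot j) ∧ (vBot = 0 ∨ ∀ j, MjBot j = VjBot j))
    (c4 : uBot = vBot → uBot ≠ 0 →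
      ∀ j, UjBot j = VjBot j ∧ MjBot j = LjBot j)
    (c5a : ∀ j, LjBot j ≤ UjBot j)
    (c5b : vBot ≠ 0 → ∀ j, MjTop j ≤ VjTop j)
    (c6a : sSup ((fun x : ℝ => (x : EReal)) '' {x | F x < 1}) ≤ UjTop ⟨n - 1, by omega⟩)
    (c6b : LjTop ⟨0, by omega⟩ ≤ sInf ((fun x : ℝ => (x : EReal)) '' {x | 0 < F x}))
    (c7 : uTop = 1)
    (c8 : vTop = 0 ∨ ∀ j, MjTop j = VjTop j)
    (c9 : ∀ j : Fin n, ∀ h : (j : ℕ) + 1 < n, UjTop j = LjTop ⟨(j : ℕ) + 1, h⟩) :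
    IsCDF (fun x =>
      U x * ∑ j, (extCDF F (Uj j x) - extCDF F (Lj j x))
        - V x * ∑ j, (extCDF F (Vj j x) - extCDF F (Mj j x))) := by
  have emono : Monotone (extCDF F) := extCDF_mono hF
  have econt : Continuous (extCDF F) := extCDF_continuous hF hFc
  -- pointwise bounds from the limits
  have hLj_le : ∀ j (x : ℝ), Lj j x ≤ LjBot j := fun j x =>
    ge_of_tendsto (hLj_bot j) (eventually_atBot.2 ⟨x, fun _ hy => c2Lj j hy⟩)
  have hUj_ge : ∀ j (x : ℝ), UjBot j ≤ Uj j x := fun j x =>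
    le_of_tendsto (hUj_bot j) (eventually_atBot.2 ⟨x, fun _ hy => c2Uj j hy⟩)
  have hLleU : ∀ j (x : ℝ), Lj j x ≤ Uj j x := fun j x =>
    ((hLj_le j x).trans (c5a j)).trans (hUj_ge j x)
  have hMj_le : ∀ j (x : ℝ), Mj j x ≤ MjTop j := fun j x =>
    ge_of_tendsto (hMj_top j) (eventually_atTop.2 ⟨x, fun _ hy => c2Mj j hy⟩)
  have hVj_ge : ∀ j (x : ℝ), VjTop j ≤ Vj j x := fun j x =>
    le_of_tendsto (hVj_top j) (eventually_atTop.2 ⟨x, fun _ hy => c2Vj j hy⟩)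
  have hMleV : vBot ≠ 0 → ∀ j (x : ℝ), Mj j x ≤ Vj j x := fun hv j x =>
    ((hMj_le j x).trans (c5b hv j)).trans (hVj_ge j x)
  have hV_le_vBot : ∀ x, V x ≤ vBot := fun x =>
    ge_of_tendsto hV_bot (eventually_atBot.2 ⟨x, fun _ hy => c2V hy⟩)
  refine ⟨?_, ?_, ?_, ?_⟩
  · -- Monotone
    intro x y hxy
    dsimp only
    have hG0 : 0 ≤ ∑ j, (extCDF F (Uj j x) - extCDF F (Lj j x)) :=
      Finset.sum_nonneg fun j _ => sub_nonneg.2 (emono (hLleU j x))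
    have hGmono : ∑ j, (extCDF F (Uj j x) - extCDF F (Lj j x))
        ≤ ∑ j, (extCDF F (Uj j y) - extCDF F (Lj j y)) :=
      Finset.sum_le_sum fun j _ => sub_le_sub (emono (c2Uj j hxy)) (emono (c2Lj j hxy))
    have h1 : U x * ∑ j, (extCDF F (Uj j x) - extCDF F (Lj j x))
        ≤ U y * ∑ j, (extCDF F (Uj j y) - extCDF F (Lj j y)) :=
      mul_le_mul (c2U hxy) hGmono hG0 (c1U y)
    have h2 : V y * ∑ j, (extCDF F (Vj j y) - extCDF F (Mj j y))
        ≤ V x * ∑ j, (extCDF F (Vj j x) - extCDF F (Mj j x)) := by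
      by_cases hv : vBot = 0
      · have hVz : ∀ z, V z = 0 := fun z =>
          le_antisymm ((hV_le_vBot z).trans (le_of_eq hv)) (c1V z)
        simp [hVz x, hVz y]
      · have hK0 : 0 ≤ ∑ j, (extCDF F (Vj j y) - extCDF F (Mj j y)) :=
          Finset.sum_nonneg fun j _ => sub_nonneg.2 (emono (hMleV hv j y))
        have hKanti : ∑ j, (extCDF F (Vj j y) - extCDF F (Mj j y))
            ≤ ∑ j, (extCDF F (Vj j x) - extCDF F (Mj j x)) :=
          Finset.sum_le_sum fun j _ =>
            sub_le_sub (emono (c2Vj j hxy)) (emono (c2Mj j hxy))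
        exact mul_le_mul (c2V hxy) hKanti hK0 (c1V x)
    exact sub_le_sub h1 h2
  · -- right-continuity
    intro x
    refine ContinuousWithinAt.sub (ContinuousWithinAt.mul (hUrc x) ?_)
      (ContinuousWithinAt.mul (hVrc x) ?_)
    · exact tendsto_finset_sum _ fun j _ =>
        Tendsto.sub (econt.continuousAt.comp_continuousWithinAt (hUjrc j x))
          (econt.continuousAt.comp_continuousWithinAt (hLjrc j x))
    · exact tendsto_finset_sum _ fun j _ =>
        Tendsto.sub (econt.continuousAt.comp_continuousWithinAt (hVjrc j x))
          (econt.continuousAt.comp_continuousWithinAt (hMjrc j x))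
  · -- limit at -∞
    have hlim : Tendsto (fun x =>
        U x * ∑ j, (extCDF F (Uj j x) - extCDF F (Lj j x))
          - V x * ∑ j, (extCDF F (Vj j x) - extCDF F (Mj j x))) atBot
        (nhds (uBot * ∑ j, (extCDF F (UjBot j) - extCDF F (LjBot j))
          - vBot * ∑ j, (extCDF F (VjBot j) - extCDF F (MjBot j)))) := by
      refine Tendsto.sub (Tendsto.mul hU_bot ?_) (Tendsto.mul hV_bot ?_)
      · exact tendsto_finset_sum _ fun j _ =>
          Tendsto.sub (econt.continuousAt.tendsto.comp (hUj_bot j))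
            (econt.continuousAt.tendsto.comp (hLj_bot j))
      · exact tendsto_finset_sum _ fun j _ =>
          Tendsto.sub (econt.continuousAt.tendsto.comp (hVj_bot j))
            (econt.continuousAt.tendsto.comp (hMj_bot j))
    have hval : uBot * ∑ j, (extCDF F (UjBot j) - extCDF F (LjBot j))
        - vBot * ∑ j, (extCDF F (VjBot j) - extCDF F (MjBot j)) = 0 := by
      by_cases huv : uBot = vBot
      · by_cases hu : uBot = 0
        · rw [hu, ← huv, hu]; ring
        · have hsum : ∑ j, (extCDF F (UjBot j) - extCDF F (LjBot j))
              = ∑ j, (extCDF F (VjBot j) - extCDF F (MjBot j)) := by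
            refine Finset.sum_congr rfl fun j _ => ?_
            rw [(c4 huv hu j).1, (c4 huv hu j).2]
          rw [hsum, huv]; ring
      · obtain ⟨h1, h2⟩ := c3 huv
        have e1 : uBot * ∑ j, (extCDF F (UjBot j) - extCDF F (LjBot j)) = 0 := by
          rcases h1 with h | h
          · rw [h]; ring
          · rw [Finset.sum_eq_zero fun j _ => by rw [h j]; ring]; ring
        have e2 : vBot * ∑ j, (extCDF F (VjBot j) - extCDF F (MjBot j)) = 0 := by
          rcases h2 with h | h
          · rw [h]; ring
          · rw [Finset.sum_eq_zero fun j _ => by rw [h j]; ring]; ring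
        rw [e1, e2]; ring
    rw [hval] at hlim
    exact hlim
  · -- limit at +∞
    have hlim : Tendsto (fun x =>
        U x * ∑ j, (extCDF F (Uj j x) - extCDF F (Lj j x))
          - V x * ∑ j, (extCDF F (Vj j x) - extCDF F (Mj j x))) atTop
        (nhds (uTop * ∑ j, (extCDF F (UjTop j) - extCDF F (LjTop j))
          - vTop * ∑ j, (extCDF F (VjTop j) - extCDF F (MjTop j)))) := by
      refine Tendsto.sub (Tendsto.mul hU_top ?_) (Tendsto.mul hV_top ?_)
      · exact tendsto_finset_sum _ fun j _ =>
          Tendsto.sub (econt.continuousAt.tendsto.comp (hUj_top j))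
            (econt.continuousAt.tendsto.comp (hLj_top j))
      · exact tendsto_finset_sum _ fun j _ =>
          Tendsto.sub (econt.continuousAt.tendsto.comp (hVj_top j))
            (econt.continuousAt.tendsto.comp (hMj_top j))
    have hval : uTop * ∑ j, (extCDF F (UjTop j) - extCDF F (LjTop j))
        - vTop * ∑ j, (extCDF F (VjTop j) - extCDF F (MjTop j)) = 1 := by
      have hsum1 : ∑ j, (extCDF F (UjTop j) - extCDF F (LjTop j)) = 1 := by
        have htel := telescope_sum hn (fun j => extCDF F (UjTop j)) (fun j => extCDF F (LjTop j))
          (fun j hj => by show extCDF F (UjTop j) = extCDF F (LjTop ⟨(j : ℕ) + 1, hj⟩); rw [c9 j hj])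
        rw [htel, extCDF_eq_one hF hFc c6a, extCDF_eq_zero hF hFc c6b]
        ring
      have hsum2 : vTop * ∑ j, (extCDF F (VjTop j) - extCDF F (MjTop j)) = 0 := by
        rcases c8 with h | h
        · rw [h]; ring
        · rw [Finset.sum_eq_zero fun j _ => by rw [← h j]; ring]; ring
      rw [hsum1, hsum2, c7]; ring
    rw [hval] at hlim
    exact hlim
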